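/- Fix α_{-k} ∈ [0,1]. The derivative with respect to α_k of u_k(α_k, α_{-k}) vanishes at α_k = c_k α_{-k} + d_k, where c_k = -(1/2)(g_{k,-k}^{(1)}/g_{k,k}^{(1)} + g_{k,-k}^{(2)}/g_{k,k}^{(2)}) and d_k = (g_{k,k}^{(1)}(1+g_{k,-k}^{(2)}) + g_{k,k}^{(2)}(g_{k,k}^{(1)}-1))/(2 g_{k,k}^{(1)} g_{k,k}^{(2)}). -/

import Mathlib

open Real Set

/-- Utility of a player with direct gains `gk1 gk2`, cross gains `gi1 gi2`,
own action `a`, opponent action `b`. -/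
noncomputable def u (gk1 gk2 gi1 gi2 a b : ℝ) : ℝ :=
  Real.logb 2 (1 + a * gk1 / (1 + b * gi1)) +
  Real.logb 2 (1 + (1 - a) * gk2 / (1 + (1 - b) * gi2))

/-- The derivative of the PA utility in the own action vanishes at
`α_k = c_k α_{-k} + d_k` (where the logarithm arguments are positive). -/
theorem pa_deriv_zero
    (gk1 gk2 gi1 gi2 : ℝ)
    (hk1 : 0 < gk1) (hk2 : 0 < gk2) (hi1 : 0 < gi1) (hi2 : 0 < gi2)
    (b : ℝ) (hb : b ∈ Set.Icc (0 : ℝ) 1)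
    (c d : ℝ)
    (hc : c = -(1 / 2) * (gi1 / gk1 + gi2 / gk2))
    (hd : d = (gk1 * (1 + gi2) + gk2 * (gk1 - 1)) / (2 * gk1 * gk2))
    (hpos1 : 0 < 1 + (c * b + d) * gk1 / (1 + b * gi1))
    (hpos2 : 0 < 1 + (1 - (c * b + d)) * gk2 / (1 + (1 - b) * gi2)) :
    HasDerivAt (fun a => u gk1 gk2 gi1 gi2 a b) 0 (c * b + d) := by
  obtain ⟨hb0, hb1⟩ := hb
  set A := 1 + b * gi1 with hA
  set B := 1 + (1 - b) * gi2 with hB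
  have hApos : 0 < A := by nlinarith
  have hBpos : 0 < B := by nlinarith
  have h1 : HasDerivAt (fun a : ℝ => 1 + a * gk1 / A) (gk1 / A) (c * b + d) := by
    simpa using (((hasDerivAt_id (c * b + d)).mul_const gk1).div_const A).const_add 1
  have h2 : HasDerivAt (fun a : ℝ => 1 + (1 - a) * gk2 / B) (-(gk2 / B)) (c * b + d) := by
    have : HasDerivAt (fun a : ℝ => 1 - a) (-1) (c * b + d) := by
      simpa using (hasDerivAt_id (c * b + d)).const_sub 1
    simpa [neg_div] using ((this.mul_const gk2).div_const B).const_add 1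
  have hl1 := h1.log hpos1.ne'
  have hl2 := h2.log hpos2.ne'
  have hsum := (hl1.add hl2).div_const (Real.log 2)
  have heq : (fun a => u gk1 gk2 gi1 gi2 a b) =
      fun a => (Real.log (1 + a * gk1 / A) + Real.log (1 + (1 - a) * gk2 / B)) / Real.log 2 := by
    funext a
    simp [u, Real.logb, add_div, hA, hB]
  rw [heq]
  refine hsum.congr_deriv ?_
  have key : gk1 / A / (1 + (c * b + d) * gk1 / A) + -(gk2 / B) / (1 + (1 - (c * b + d)) * gk2 / B) = 0 := by
    rw [div_add_div _ _ hpos1.ne' hpos2.ne', div_eq_zero_iff]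
    left
    field_simp [hApos.ne', hBpos.ne']
    rw [hA, hB, hc, hd]
    field_simp
    ring
  rw [key]
  simp
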